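/- Let ε ≥ 0 and Δ > 0. Let i ≤ −1 and 0 ≤ r < Δ be real numbers, and let a, b, m be real numbers satisfying |a − Φ⁻(i)| ≤ ε, |b − (Φ⁻)'(i)| ≤ ε, and |m − r·b| ≤ ε. Then the fixed-point first-order Taylor approximation a − m of Φ⁻(i − r) satisfies |Φ⁻(i − r) − (a − m)| ≤ −E⁻(−1, Δ) + (2 + Δ)·ε. -/

import Mathlib

/-- Φ⁻(x) = log₂(1 − 2^x) -/
noncomputable def Phim (x : ℝ) : ℝ := Real.logb 2 (1 - (2:ℝ) ^ x)

/-- (Φ⁻)'(x) = −2^x / (1 − 2^x) -/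
noncomputable def dPhim (x : ℝ) : ℝ := -(2:ℝ) ^ x / (1 - (2:ℝ) ^ x)

/-- First-order Taylor remainder E⁻(i, r) = Φ⁻(i − r) − Φ⁻(i) + r·(Φ⁻)'(i) -/
noncomputable def Em (i r : ℝ) : ℝ := Phim (i - r) - Phim i + r * dPhim i

noncomputable def ddPhim (x : ℝ) : ℝ :=
  -(Real.log 2 * (2:ℝ) ^ x) / (1 - (2:ℝ) ^ x) ^ 2

lemma two_rpow_pos (x : ℝ) : 0 < (2:ℝ) ^ x := Real.rpow_pos_of_pos two_pos x

lemma two_rpow_lt_one {x : ℝ} (hx : x < 0) : (2:ℝ) ^ x < 1 :=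
  Real.rpow_lt_one_of_one_lt_of_neg one_lt_two hx

lemma hasDerivAt_two_rpow (x : ℝ) :
    HasDerivAt (fun y : ℝ => (2:ℝ) ^ y) ((2:ℝ) ^ x * Real.log 2) x :=
  (Real.hasStrictDerivAt_const_rpow two_pos x).hasDerivAt

lemma hasDerivAt_Phim {x : ℝ} (hx : x < 0) : HasDerivAt Phim (dPhim x) x := by
  have h1 : (2:ℝ) ^ x < 1 := two_rpow_lt_one hx
  have hp := two_rpow_pos x
  have hne : 1 - (2:ℝ) ^ x ≠ 0 := by linarith
  have hlog : Real.log 2 ≠ 0 := ne_of_gt (Real.log_pos one_lt_two)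
  have h2 : HasDerivAt (fun y : ℝ => 1 - (2:ℝ) ^ y) (-((2:ℝ) ^ x * Real.log 2)) x := by
    simpa using (hasDerivAt_two_rpow x).const_sub 1
  have h3 := (h2.log hne).div_const (Real.log 2)
  have heq : Phim = fun y : ℝ => Real.log (1 - (2:ℝ) ^ y) / Real.log 2 := by
    funext y; rw [Phim, Real.logb]
  rw [heq]
  refine h3.congr_deriv ?_
  rw [dPhim]; field_simp

lemma hasDerivAt_dPhim {x : ℝ} (hx : x < 0) : HasDerivAt dPhim (ddPhim x) x := by
  have h1 : (2:ℝ) ^ x < 1 := two_rpow_lt_one hx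
  have hp := two_rpow_pos x
  have hne : 1 - (2:ℝ) ^ x ≠ 0 := by linarith
  have hf : HasDerivAt (fun y : ℝ => -(2:ℝ) ^ y) (-((2:ℝ) ^ x * Real.log 2)) x :=
    (hasDerivAt_two_rpow x).neg
  have hg : HasDerivAt (fun y : ℝ => 1 - (2:ℝ) ^ y) (-((2:ℝ) ^ x * Real.log 2)) x := by
    simpa using (hasDerivAt_two_rpow x).const_sub 1
  have h := hf.div hg hne
  have heq : dPhim = fun y : ℝ => -(2:ℝ) ^ y / (1 - (2:ℝ) ^ y) := by
    funext y; rw [dPhim]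
  rw [heq]
  refine h.congr_deriv ?_
  rw [ddPhim]; field_simp; ring

lemma dPhim_anti {x y : ℝ} (hxy : x ≤ y) (hy : y < 0) : dPhim y ≤ dPhim x := by
  have hu := two_rpow_pos x
  have hv := two_rpow_pos y
  have huv : (2:ℝ) ^ x ≤ (2:ℝ) ^ y := Real.rpow_le_rpow_of_exponent_le one_le_two hxy
  have hv1 : (2:ℝ) ^ y < 1 := two_rpow_lt_one hy
  have hu1 : (2:ℝ) ^ x < 1 := lt_of_le_of_lt huv hv1
  rw [dPhim, dPhim, div_le_div_iff₀ (by linarith) (by linarith)]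
  nlinarith

lemma ddPhim_anti {x y : ℝ} (hxy : x ≤ y) (hy : y < 0) : ddPhim y ≤ ddPhim x := by
  have hu := two_rpow_pos x
  have hv := two_rpow_pos y
  have huv : (2:ℝ) ^ x ≤ (2:ℝ) ^ y := Real.rpow_le_rpow_of_exponent_le one_le_two hxy
  have hv1 : (2:ℝ) ^ y < 1 := two_rpow_lt_one hy
  have hu1 : (2:ℝ) ^ x < 1 := lt_of_le_of_lt huv hv1
  have hlog : 0 < Real.log 2 := Real.log_pos one_lt_two
  rw [ddPhim, ddPhim, div_le_div_iff₀ (pow_pos (by linarith : (0:ℝ) < 1 - (2:ℝ) ^ y) 2)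
    (pow_pos (by linarith : (0:ℝ) < 1 - (2:ℝ) ^ x) 2)]
  nlinarith [mul_nonneg (sub_nonneg.mpr huv) (by nlinarith : (0:ℝ) ≤ 1 - (2:ℝ) ^ x * (2:ℝ) ^ y),
    mul_pos hlog hu, mul_pos hlog hv]

/-- Concavity: the Taylor remainder is nonpositive. -/
lemma Em_nonpos {i r : ℝ} (hi : i < 0) (hr : 0 ≤ r) : Em i r ≤ 0 := by
  rcases eq_or_lt_of_le hr with h | h
  · simp [Em, ← h]
  · have hab : i - r < i := by linarith
    obtain ⟨c, hc, hceq⟩ := exists_hasDerivAt_eq_slope Phim dPhim hab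
      (fun x hx => (hasDerivAt_Phim (lt_of_le_of_lt hx.2 hi)).continuousAt.continuousWithinAt)
      (fun x hx => hasDerivAt_Phim (lt_trans hx.2 hi))
    have hrr : i - (i - r) = r := by ring
    rw [hrr] at hceq
    have h1 : Phim i - Phim (i - r) = r * dPhim c := by
      rw [hceq]; field_simp
    have h2 : dPhim i ≤ dPhim c := dPhim_anti (le_of_lt hc.2) hi
    have h3 : r * dPhim i ≤ r * dPhim c := by
      exact mul_le_mul_of_nonneg_left h2 hr
    rw [Em]; linarith

/-- Monotonicity in r at i = -1. -/
lemma Em_r_mono {r Δ : ℝ} (hr : 0 ≤ r) (hrΔ : r ≤ Δ) : Em (-1) Δ ≤ Em (-1) r := by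
  rcases eq_or_lt_of_le hrΔ with h | h
  · rw [h]
  · set H : ℝ → ℝ := fun t => Phim (-1 - t) - Phim (-1) + t * dPhim (-1) with hH
    have hderiv : ∀ t : ℝ, 0 ≤ t → HasDerivAt H (dPhim (-1 - t) * (-1) + dPhim (-1)) t := by
      intro t ht
      have hinner : HasDerivAt (fun s : ℝ => -1 - s) (-1) t := by
        simpa using (hasDerivAt_id t).const_sub (-1)
      have hneg : -1 - t < 0 := by linarith
      have h1 : HasDerivAt (fun s : ℝ => Phim (-1 - s)) (dPhim (-1 - t) * (-1)) t :=
        (hasDerivAt_Phim hneg).comp t hinner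
      have h2 : HasDerivAt (fun s : ℝ => s * dPhim (-1)) (dPhim (-1)) t := by
        simpa using (hasDerivAt_id t).mul_const (dPhim (-1))
      exact (h1.sub_const (Phim (-1))).add h2
    obtain ⟨c, hc, hceq⟩ := exists_hasDerivAt_eq_slope H
      (fun t => dPhim (-1 - t) * (-1) + dPhim (-1)) h
      (fun t ht => (hderiv t (le_trans hr ht.1)).continuousAt.continuousWithinAt)
      (fun t ht => hderiv t (le_trans hr (le_of_lt ht.1)))
    have hc0 : 0 ≤ c := le_trans hr (le_of_lt hc.1)
    have hle : dPhim (-1) ≤ dPhim (-1 - c) := dPhim_anti (by linarith) (by norm_num)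
    have hnum : dPhim (-1 - c) * (-1) + dPhim (-1) ≤ 0 := by linarith
    have hpos : 0 < Δ - r := by linarith
    have : H Δ - H r ≤ 0 := by
      have h' : (H Δ - H r) / (Δ - r) ≤ 0 := hceq ▸ hnum
      rcases div_nonpos_iff.mp h' with ⟨h1, h2⟩ | ⟨h1, h2⟩ <;> linarith
    have hEm : ∀ t : ℝ, Em (-1) t = H t := by
      intro t; rw [Em, hH]
    rw [hEm, hEm]; linarith
  
/-- Monotonicity in i. -/
lemma Em_i_mono {i r : ℝ} (hi : i ≤ -1) (hr : 0 ≤ r) : Em (-1) r ≤ Em i r := by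
  rcases eq_or_lt_of_le hi with h | h
  · rw [h]
  · set G : ℝ → ℝ := fun x => Phim (x - r) - Phim x + r * dPhim x with hG
    have hderiv : ∀ x : ℝ, x < 0 →
        HasDerivAt G (dPhim (x - r) * 1 - dPhim x + r * ddPhim x) x := by
      intro x hx
      have hxr : x - r < 0 := by linarith
      have hinner : HasDerivAt (fun s : ℝ => s - r) 1 x := by
        simpa using (hasDerivAt_id x).sub_const r
      have h1 : HasDerivAt (fun s : ℝ => Phim (s - r)) (dPhim (x - r) * 1) x :=
        (hasDerivAt_Phim hxr).comp (h := fun s : ℝ => s - r) x hinner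
      have h2 : HasDerivAt (fun s : ℝ => r * dPhim s) (r * ddPhim x) x :=
        (hasDerivAt_dPhim hx).const_mul r
      exact (h1.sub (hasDerivAt_Phim hx)).add h2
    obtain ⟨c, hc, hceq⟩ := exists_hasDerivAt_eq_slope G
      (fun x => dPhim (x - r) * 1 - dPhim x + r * ddPhim x) h
      (fun x hx => (hderiv x (lt_of_le_of_lt hx.2 (by norm_num))).continuousAt.continuousWithinAt)
      (fun x hx => hderiv x (lt_trans hx.2 (by norm_num)))
    have hc0 : c < 0 := lt_trans hc.2 (by norm_num)
    -- show the derivative at c is nonpositive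
    have hG'le : dPhim (c - r) * 1 - dPhim c + r * ddPhim c ≤ 0 := by
      rcases eq_or_lt_of_le hr with hrz | hrpos
      · rw [← hrz]; simp
      · have hab : c - r < c := by linarith
        obtain ⟨d, hd, hdeq⟩ := exists_hasDerivAt_eq_slope dPhim ddPhim hab
          (fun x hx => (hasDerivAt_dPhim (lt_of_le_of_lt hx.2 hc0)).continuousAt.continuousWithinAt)
          (fun x hx => hasDerivAt_dPhim (lt_trans hx.2 hc0))
        have hrr : c - (c - r) = r := by ring
        rw [hrr] at hdeq
        have h1 : dPhim c - dPhim (c - r) = r * ddPhim d := by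
          rw [hdeq]; field_simp
        have h2 : ddPhim c ≤ ddPhim d := ddPhim_anti (le_of_lt hd.2) hc0
        nlinarith
    have hpos : 0 < -1 - i := by linarith
    have : G (-1) - G i ≤ 0 := by
      have h' : (G (-1) - G i) / (-1 - i) ≤ 0 := hceq ▸ hG'le
      rcases div_nonpos_iff.mp h' with ⟨h1, h2⟩ | ⟨h1, h2⟩ <;> linarith
    have hEm : ∀ x : ℝ, Em x r = G x := by
      intro x; rw [Em, hG]
    rw [hEm, hEm]; linarith

theorem stmt_4 (ε Δ : ℝ) (hε : 0 ≤ ε) (hΔ : 0 < Δ)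
    (i r : ℝ) (hi : i ≤ -1) (hr0 : 0 ≤ r) (hrΔ : r < Δ)
    (a b m : ℝ)
    (ha : |a - Phim i| ≤ ε)
    (hb : |b - dPhim i| ≤ ε)
    (hm : |m - r * b| ≤ ε) :
    |Phim (i - r) - (a - m)| ≤ -Em (-1) Δ + (2 + Δ) * ε := by
  have key : Em (-1) Δ ≤ Em i r :=
    le_trans (Em_r_mono hr0 (le_of_lt hrΔ)) (Em_i_mono hi hr0)
  have hE : Em i r ≤ 0 := Em_nonpos (by linarith) hr0
  have hdecomp : Phim (i - r) - (a - m)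
      = Em i r + (Phim i - a) + (m - r * b) + r * (b - dPhim i) := by
    rw [Em]; ring
  have h1 : |Phim i - a| ≤ ε := by rwa [abs_sub_comm] at ha
  have h3 : |r * (b - dPhim i)| ≤ Δ * ε := by
    rw [abs_mul, abs_of_nonneg hr0]
    exact mul_le_mul (le_of_lt hrΔ) hb (abs_nonneg _) (le_of_lt hΔ)
  have habs : |Phim (i - r) - (a - m)|
      ≤ |Em i r| + |Phim i - a| + |m - r * b| + |r * (b - dPhim i)| := by
    rw [hdecomp]
    calc |Em i r + (Phim i - a) + (m - r * b) + r * (b - dPhim i)|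
        ≤ |Em i r + (Phim i - a) + (m - r * b)| + |r * (b - dPhim i)| := abs_add_le _ _
      _ ≤ |Em i r + (Phim i - a)| + |m - r * b| + |r * (b - dPhim i)| := by
          linarith [abs_add_le (Em i r + (Phim i - a)) (m - r * b)]
      _ ≤ |Em i r| + |Phim i - a| + |m - r * b| + |r * (b - dPhim i)| := by
          linarith [abs_add_le (Em i r) (Phim i - a)]
  rw [abs_of_nonpos hE] at habs
  linarith
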